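/- Let p ∈ ℝ with p ∉ {−(k+1)/2 : k ∈ ℕ₀}, let P be a real 2×2 matrix, ψ ∈ ℝ, and let (A,B) = Ξₚ(P,ψ). Then A and B have no common zeros: for every z ∈ ℂ, A(z) ≠ 0 or B(z) ≠ 0. -/

import Mathlib

open Matrix MeasureTheory Filter
open FormalMultilinearSeries

noncomputable section

def matJ : Matrix (Fin 2) (Fin 2) ℝ := !![0, -1; 1, 0]

def Dpsi (p ψ a : ℝ) : Matrix (Fin 2) (Fin 2) ℝ :=
  if p = 0 then !![1, 0; ψ * Real.log a, 1]
  else !![1, 0; ψ / (2 * p), 1] * !![a ^ p, 0; 0, a ^ (-p)] * !![1, 0; -ψ / (2 * p), 1]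

def HPpsi (p ψ : ℝ) (P : Matrix (Fin 2) (Fin 2) ℝ) (a : ℝ) : Matrix (Fin 2) (Fin 2) ℝ :=
  Dpsi p ψ a * P * (Dpsi p ψ a)ᵀ

def SatRec (p : ℝ) (P : Matrix (Fin 2) (Fin 2) ℝ) (ψ : ℝ) (α β : ℕ → ℝ) : Prop :=
  α 0 = 1 ∧ β 0 = 0 ∧ ∀ n : ℕ,
    !![α (n + 1), β (n + 1)] =
      (-1 / (((n : ℝ) + 1) * (2 * p + (n : ℝ) + 1))) •
        (!![α n, β n] * (P * matJ * !![2 * p + (n : ℝ) + 1, 0; ψ, (n : ℝ) + 1]))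

def genF (c : ℕ → ℝ) (z : ℂ) : ℂ := ∑' n : ℕ, (c n : ℂ) * z ^ n

def rowAB (p ψ : ℝ) (α β : ℕ → ℝ) (a : ℝ) (z : ℂ) : Matrix (Fin 1) (Fin 2) ℂ :=
  !![((a ^ p : ℝ) : ℂ) * genF α ((a : ℂ) * z), ((a ^ p : ℝ) : ℂ) * genF β ((a : ℂ) * z)] *
    ((Dpsi p ψ a)⁻¹).map Complex.ofReal


lemma myCoeff (c : ℕ → ℂ) (n : ℕ) : (ofScalars ℂ c).coeff n = c n := by
  simp [ofScalars, FormalMultilinearSeries.coeff, List.prod_ofFn]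

lemma myBall (c : ℕ → ℝ) (F : ℂ → ℂ) (hF : ∀ z : ℂ, HasSum (fun n : ℕ => (c n : ℂ) * z ^ n) (F z)) :
    HasFPowerSeriesOnBall F (ofScalars ℂ (fun n => (c n : ℂ))) 0 ⊤ := by
  have hrad : (ofScalars ℂ (fun n => (c n : ℂ))).radius = ⊤ := by
    apply radius_eq_top_of_forall_nnreal_isBigO
    intro r
    have h1 := ((hF r).summable.tendsto_atTop_zero).norm
    have h2 : Filter.Tendsto (fun n : ℕ => ‖(ofScalars ℂ (fun n => (c n : ℂ))) n‖ * (r : ℝ) ^ n)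
        Filter.atTop (nhds 0) := by
      simpa [ofScalars_norm, norm_mul, norm_pow, myCoeff] using h1
    exact h2.isBigO_one ℝ
  refine ⟨hrad.ge, by simp, fun {y} hy => ?_⟩
  have h3 := hF y
  simp only [apply_eq_pow_smul_coeff, myCoeff, smul_eq_mul, zero_add]
  have hcong : (fun n : ℕ => y ^ n * (c n : ℂ)) = (fun n : ℕ => (c n : ℂ) * y ^ n) := by
    funext n; ring
  rw [hcong]; exact h3

lemma myDeriv (c : ℕ → ℝ) (F : ℂ → ℂ) (hF : ∀ z : ℂ, HasSum (fun n : ℕ => (c n : ℂ) * z ^ n) (F z))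
    (z : ℂ) :
    HasSum (fun n : ℕ => (((n : ℂ) + 1) * (c (n + 1) : ℂ)) * z ^ (n + 1)) (z * deriv F z) := by
  have hball := myBall c F hF
  have hfd := hball.fderiv
  have hy : z ∈ Metric.eball (0 : ℂ) ⊤ := by simp
  have hs := hfd.hasSum hy
  have hs2 := (ContinuousLinearMap.apply ℂ ℂ z).hasSum hs
  simp only [ContinuousLinearMap.apply_apply] at hs2
  have key : (fun n : ℕ => ((ofScalars ℂ (fun n => (c n : ℂ))).derivSeries n (fun _ => z)) z)
      = (fun n : ℕ => (((n : ℂ) + 1) * (c (n + 1) : ℂ)) * z ^ (n + 1)) := by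
    funext n
    rw [derivSeries_apply_diag]
    rw [apply_eq_pow_smul_coeff, myCoeff]
    simp only [smul_eq_mul]
    ring
  have hfz : (fderiv ℂ F (0 + z)) z = z * deriv F z := by
    rw [zero_add]
    calc (fderiv ℂ F z) z = (fderiv ℂ F z) (z • 1) := by norm_num
    _ = z • ((fderiv ℂ F z) 1) := (fderiv ℂ F z).map_smul z 1
    _ = z * deriv F z := by rw [smul_eq_mul, fderiv_apply_one_eq_deriv]
  rw [hfz, key] at hs2
  exact hs2

lemma myDiff (c : ℕ → ℝ) (F : ℂ → ℂ) (hF : ∀ z : ℂ, HasSum (fun n : ℕ => (c n : ℂ) * z ^ n) (F z))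
    (z : ℂ) : HasDerivAt F (deriv F z) z := by
  have hball := myBall c F hF
  have h4 : AnalyticAt ℂ F z := hball.analyticOnNhd z (by simp)
  exact h4.differentiableAt.hasDerivAt

lemma myAnalytic (c : ℕ → ℝ) (F : ℂ → ℂ)
    (hF : ∀ z : ℂ, HasSum (fun n : ℕ => (c n : ℂ) * z ^ n) (F z)) :
    AnalyticOnNhd ℂ F Set.univ := by
  have hball := myBall c F hF
  intro z _
  exact hball.analyticOnNhd z (by simp)


lemma recBeta (p : ℝ) (hp : ∀ k : ℕ, p ≠ -((k : ℝ) + 1) / 2)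
    (P : Matrix (Fin 2) (Fin 2) ℝ) (ψ : ℝ) (α β : ℕ → ℝ)
    (hrec : SatRec p P ψ α β) (n : ℕ) :
    (2 * p + (n : ℝ) + 1) * β (n + 1) = P 0 0 * α n + P 1 0 * β n := by
  have h2p : 2 * p + (n : ℝ) + 1 ≠ 0 := by
    intro h; exact hp n (by linarith)
  have hn1 : ((n : ℝ) + 1) ≠ 0 := by positivity
  have hn := hrec.2.2 n
  have h1 : (!![α (n+1), β (n+1)] : Matrix (Fin 1) (Fin 2) ℝ) 0 1 =
      ((-1 / (((n : ℝ) + 1) * (2 * p + (n : ℝ) + 1))) •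
        (!![α n, β n] * (P * matJ * !![2 * p + (n : ℝ) + 1, 0; ψ, (n : ℝ) + 1]))) 0 1 := by
    rw [hn]
  simp [Matrix.mul_apply, Matrix.vecMul, dotProduct, Fin.sum_univ_two, matJ, Matrix.smul_apply] at h1
  field_simp at h1
  exact mul_left_cancel₀ hn1 (by linear_combination ((n : ℝ) + 1) * h1)

lemma recAlpha (p : ℝ) (hp : ∀ k : ℕ, p ≠ -((k : ℝ) + 1) / 2)
    (P : Matrix (Fin 2) (Fin 2) ℝ) (ψ : ℝ) (α β : ℕ → ℝ)
    (hrec : SatRec p P ψ α β) (n : ℕ) :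
    ((n : ℝ) + 1) * α (n + 1) = ψ * β (n + 1) - (P 0 1 * α n + P 1 1 * β n) := by
  have h2p : 2 * p + (n : ℝ) + 1 ≠ 0 := by
    intro h; exact hp n (by linarith)
  have hn1 : ((n : ℝ) + 1) ≠ 0 := by positivity
  have hb := recBeta p hp P ψ α β hrec n
  have hn := hrec.2.2 n
  have h1 : (!![α (n+1), β (n+1)] : Matrix (Fin 1) (Fin 2) ℝ) 0 0 =
      ((-1 / (((n : ℝ) + 1) * (2 * p + (n : ℝ) + 1))) •
        (!![α n, β n] * (P * matJ * !![2 * p + (n : ℝ) + 1, 0; ψ, (n : ℝ) + 1]))) 0 0 := by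
    rw [hn]
  simp [Matrix.mul_apply, Matrix.vecMul, dotProduct, Fin.sum_univ_two, matJ, Matrix.smul_apply] at h1
  field_simp at h1
  exact mul_left_cancel₀ h2p (by linear_combination h1 - ψ * hb)


section EqAB
variable (p : ℝ) (hp : ∀ k : ℕ, p ≠ -((k : ℝ) + 1) / 2)
    (P : Matrix (Fin 2) (Fin 2) ℝ) (ψ : ℝ) (α β : ℕ → ℝ)
    (hrec : SatRec p P ψ α β)
    (A B : ℂ → ℂ)
    (hA : ∀ z : ℂ, HasSum (fun n : ℕ => (α n : ℂ) * z ^ n) (A z))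
    (hB : ∀ z : ℂ, HasSum (fun n : ℕ => (β n : ℂ) * z ^ n) (B z))

include hp hrec hA hB

lemma shiftB (z : ℂ) : HasSum (fun n : ℕ => (β (n + 1) : ℂ) * z ^ (n + 1)) (B z) := by
  refine (hasSum_nat_add_iff (f := fun n => (β n : ℂ) * z ^ n) 1).mpr ?_
  simpa [hrec.2.1] using hB z

lemma eqA (z : ℂ) : z * deriv A z
    = (ψ : ℂ) * B z - (((P 0 1 : ℝ) : ℂ) * z * A z + ((P 1 1 : ℝ) : ℂ) * z * B z) := by
  have h1 := myDeriv α A hA z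
  have h2 := (shiftB p hp P ψ α β hrec A B hA hB z).mul_left (ψ : ℂ)
  have h3 := (hA z).mul_left (((P 0 1 : ℝ) : ℂ) * z)
  have h4 := (hB z).mul_left (((P 1 1 : ℝ) : ℂ) * z)
  have h5 := h2.sub (h3.add h4)
  have hfun : (fun n : ℕ => (((n : ℂ) + 1) * (α (n + 1) : ℂ)) * z ^ (n + 1))
      = fun n : ℕ => (ψ : ℂ) * ((β (n + 1) : ℂ) * z ^ (n + 1)) -
        ((((P 0 1 : ℝ) : ℂ) * z) * ((α n : ℂ) * z ^ n) +
         (((P 1 1 : ℝ) : ℂ) * z) * ((β n : ℂ) * z ^ n)) := by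
    funext n
    have hr := recAlpha p hp P ψ α β hrec n
    calc (((n : ℂ) + 1) * (α (n + 1) : ℂ)) * z ^ (n + 1)
        = (((((n : ℝ) + 1) * α (n + 1)) : ℝ) : ℂ) * z ^ (n + 1) := by push_cast; ring
      _ = (((ψ * β (n + 1) - (P 0 1 * α n + P 1 1 * β n)) : ℝ) : ℂ) * z ^ (n + 1) := by
          rw [hr]
      _ = _ := by push_cast; ring
  rw [← hfun] at h5
  exact h1.unique h5

lemma eqB (z : ℂ) : z * deriv B z + 2 * (p : ℂ) * B z
    = ((P 0 0 : ℝ) : ℂ) * z * A z + ((P 1 0 : ℝ) : ℂ) * z * B z := by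
  have h1 := myDeriv β B hB z
  have h2 := (shiftB p hp P ψ α β hrec A B hA hB z).mul_left (2 * (p : ℂ))
  have h12 := h1.add h2
  have h3 := (hA z).mul_left (((P 0 0 : ℝ) : ℂ) * z)
  have h4 := (hB z).mul_left (((P 1 0 : ℝ) : ℂ) * z)
  have h5 := h3.add h4
  have hfun : (fun n : ℕ => (((n : ℂ) + 1) * (β (n + 1) : ℂ)) * z ^ (n + 1)
        + 2 * (p : ℂ) * ((β (n + 1) : ℂ) * z ^ (n + 1)))
      = fun n : ℕ => (((P 0 0 : ℝ) : ℂ) * z) * ((α n : ℂ) * z ^ n) +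
         (((P 1 0 : ℝ) : ℂ) * z) * ((β n : ℂ) * z ^ n) := by
    funext n
    have hr := recBeta p hp P ψ α β hrec n
    calc (((n : ℂ) + 1) * (β (n + 1) : ℂ)) * z ^ (n + 1)
          + 2 * (p : ℂ) * ((β (n + 1) : ℂ) * z ^ (n + 1))
        = ((((2 * p + (n : ℝ) + 1) * β (n + 1)) : ℝ) : ℂ) * z ^ (n + 1) := by push_cast; ring
      _ = (((P 0 0 * α n + P 1 0 * β n) : ℝ) : ℂ) * z ^ (n + 1) := by rw [hr]
      _ = _ := by push_cast; ring
  rw [← hfun] at h5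
  exact h12.unique h5

end EqAB


set_option maxHeartbeats 1000000 in
/-- the generating functions (A,B) = Ξₚ(P,ψ) have no common zeros. -/
theorem statement1 (p : ℝ) (hp : ∀ k : ℕ, p ≠ -((k : ℝ) + 1) / 2)
    (P : Matrix (Fin 2) (Fin 2) ℝ) (ψ : ℝ) (α β : ℕ → ℝ)
    (hrec : SatRec p P ψ α β)
    (A B : ℂ → ℂ)
    (hA : ∀ z : ℂ, HasSum (fun n : ℕ => (α n : ℂ) * z ^ n) (A z))
    (hB : ∀ z : ℂ, HasSum (fun n : ℕ => (β n : ℂ) * z ^ n) (B z)) :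
    ∀ z : ℂ, A z ≠ 0 ∨ B z ≠ 0 := by
  have hA0 : A 0 = 1 := by
    have h2 : HasSum (fun n : ℕ => (α n : ℂ) * (0 : ℂ) ^ n) ((α 0 : ℂ) * (0 : ℂ) ^ 0) :=
      hasSum_single 0 (fun b hb => by simp [zero_pow hb])
    have h3 := (hA 0).unique h2
    rw [h3, hrec.1]; norm_num
  intro z₀
  by_contra hcon
  push_neg at hcon
  obtain ⟨hAz, hBz⟩ := hcon
  have hz0 : z₀ ≠ 0 := by
    rintro rfl; rw [hA0] at hAz; exact one_ne_zero hAz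
  set r : ℝ := ‖z₀‖ with hrdef
  have hr : 0 < r := by simpa [hrdef] using norm_pos_iff.mpr hz0
  set d : ℂ := z₀ / (r : ℂ) with hddef
  have hd1 : ‖d‖ = 1 := by
    rw [hddef, norm_div, Complex.norm_real, Real.norm_eq_abs, abs_of_pos hr]
    exact div_self hr.ne'
  have hdne : d ≠ 0 := by
    intro h; rw [h] at hd1; simp at hd1
  set γ : ℝ → ℂ := fun t => z₀ + (t : ℂ) * d with hγdef
  have hγ0 : γ 0 = z₀ := by simp [hγdef]
  have hγnorm : ∀ t : ℝ, 0 ≤ t → r ≤ ‖γ t‖ := by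
    intro t ht
    have hfact : γ t = ((1 + t / r : ℝ) : ℂ) * z₀ := by
      rw [hγdef, hddef]
      push_cast
      field_simp
    rw [hfact, norm_mul, Complex.norm_real]
    have h1 : (1 : ℝ) ≤ |1 + t / r| := by
      rw [abs_of_pos (by positivity)]
      have : 0 ≤ t / r := by positivity
      linarith
    calc r = 1 * r := (one_mul r).symm
    _ ≤ |1 + t / r| * ‖z₀‖ := by apply mul_le_mul h1 le_rfl hr.le (by positivity)
  have hγne : ∀ t : ℝ, 0 ≤ t → γ t ≠ 0 := by
    intro t ht h
    have := hγnorm t ht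
    rw [h] at this; simp at this; linarith
  set c : ℝ → ℂ := fun t => (γ (max t 0))⁻¹ with hcdef
  have hcbound : ∀ t : ℝ, ‖c t‖ ≤ 1 / r := by
    intro t
    rw [hcdef]
    simp only [norm_inv]
    rw [one_div]
    exact inv_anti₀ hr (hγnorm _ (le_max_right t 0))
  set v : ℝ → ℂ × ℂ → ℂ × ℂ := fun t u =>
    (d * ((ψ : ℂ) * u.2 * c t - (((P 0 1 : ℝ) : ℂ) * u.1 + ((P 1 1 : ℝ) : ℂ) * u.2)),
     d * ((((P 0 0 : ℝ) : ℂ) * u.1 + ((P 1 0 : ℝ) : ℂ) * u.2) - 2 * (p : ℂ) * u.2 * c t))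
    with hvdef
  set Kr : ℝ := (|ψ| + 2 * |p|) / r + (|P 0 1| + |P 1 1| + |P 0 0| + |P 1 0|) with hKdef
  have hKr : 0 ≤ Kr := by positivity
  have hlip : ∀ t : ℝ, LipschitzWith Kr.toNNReal (v t) := by
    intro t
    apply LipschitzWith.of_dist_le_mul
    intro u u'
    rw [Real.coe_toNNReal _ hKr, Prod.dist_eq]
    set D := dist u u' with hDdef
    have hD0 : 0 ≤ D := dist_nonneg
    have hx : ‖u.1 - u'.1‖ ≤ D := by
      rw [← dist_eq_norm]; rw [hDdef, Prod.dist_eq]; exact le_max_left _ _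
    have hy : ‖u.2 - u'.2‖ ≤ D := by
      rw [← dist_eq_norm]; rw [hDdef, Prod.dist_eq]; exact le_max_right _ _
    have hct := hcbound t
    apply max_le
    · rw [dist_eq_norm]
      have hdiff : (v t u).1 - (v t u').1
          = d * ((ψ : ℂ) * c t * (u.2 - u'.2) - (((P 0 1 : ℝ) : ℂ) * (u.1 - u'.1)
            + ((P 1 1 : ℝ) : ℂ) * (u.2 - u'.2))) := by
        simp only [hvdef]; ring
      rw [hdiff, norm_mul, hd1, one_mul]
      calc ‖(ψ : ℂ) * c t * (u.2 - u'.2) - (((P 0 1 : ℝ) : ℂ) * (u.1 - u'.1)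
            + ((P 1 1 : ℝ) : ℂ) * (u.2 - u'.2))‖
          ≤ ‖(ψ : ℂ) * c t * (u.2 - u'.2)‖ + (‖((P 0 1 : ℝ) : ℂ) * (u.1 - u'.1)‖
            + ‖((P 1 1 : ℝ) : ℂ) * (u.2 - u'.2)‖) :=
            (norm_sub_le _ _).trans (by gcongr; exact norm_add_le _ _)
        _ = |ψ| * ‖c t‖ * ‖u.2 - u'.2‖ + (|P 0 1| * ‖u.1 - u'.1‖ + |P 1 1| * ‖u.2 - u'.2‖) := by
            simp [norm_mul, Complex.norm_real, Real.norm_eq_abs]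
            try ring
        _ ≤ |ψ| * (1 / r) * D + (|P 0 1| * D + |P 1 1| * D) := by
            gcongr <;> positivity
        _ ≤ Kr * D := by
            rw [hKdef, show (|ψ| + 2 * |p|) / r = |ψ| * (1 / r) + 2 * |p| * (1 / r) by ring]
            nlinarith [mul_nonneg (mul_nonneg (by positivity : (0:ℝ) ≤ 2 * |p|)
                (by positivity : (0:ℝ) ≤ 1 / r)) hD0,
              mul_nonneg (abs_nonneg (P 0 0)) hD0, mul_nonneg (abs_nonneg (P 1 0)) hD0]
    · rw [dist_eq_norm]
      have hdiff : (v t u).2 - (v t u').2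
          = d * ((((P 0 0 : ℝ) : ℂ) * (u.1 - u'.1) + ((P 1 0 : ℝ) : ℂ) * (u.2 - u'.2))
            - 2 * (p : ℂ) * c t * (u.2 - u'.2)) := by
        simp only [hvdef]; ring
      rw [hdiff, norm_mul, hd1, one_mul]
      calc ‖(((P 0 0 : ℝ) : ℂ) * (u.1 - u'.1) + ((P 1 0 : ℝ) : ℂ) * (u.2 - u'.2))
            - 2 * (p : ℂ) * c t * (u.2 - u'.2)‖
          ≤ (‖((P 0 0 : ℝ) : ℂ) * (u.1 - u'.1)‖ + ‖((P 1 0 : ℝ) : ℂ) * (u.2 - u'.2)‖)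
            + ‖2 * (p : ℂ) * c t * (u.2 - u'.2)‖ :=
            (norm_sub_le _ _).trans (by gcongr; exact norm_add_le _ _)
        _ = (|P 0 0| * ‖u.1 - u'.1‖ + |P 1 0| * ‖u.2 - u'.2‖)
            + 2 * |p| * ‖c t‖ * ‖u.2 - u'.2‖ := by
            simp [norm_mul, Complex.norm_real, Real.norm_eq_abs]
            try ring
        _ ≤ (|P 0 0| * D + |P 1 0| * D) + 2 * |p| * (1 / r) * D := by
            gcongr <;> positivity
        _ ≤ Kr * D := by
            rw [hKdef, show (|ψ| + 2 * |p|) / r = |ψ| * (1 / r) + 2 * |p| * (1 / r) by ring]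
            nlinarith [mul_nonneg (mul_nonneg (abs_nonneg ψ)
                (by positivity : (0:ℝ) ≤ 1 / r)) hD0,
              mul_nonneg (abs_nonneg (P 0 1)) hD0, mul_nonneg (abs_nonneg (P 1 1)) hD0]
  -- the trajectory
  set f : ℝ → ℂ × ℂ := fun t => (A (γ t), B (γ t)) with hfdef
  have hγd : ∀ t : ℝ, HasDerivAt γ d t := by
    intro t
    have h1 : HasDerivAt (fun s : ℝ => (s : ℂ)) 1 t := by
      simpa using (hasDerivAt_id t).ofReal_comp
    have h2 := (h1.mul_const d).const_add z₀
    simpa [hγdef] using h2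
  have hdA : Differentiable ℂ A := fun z => (myDiff α A hA z).differentiableAt
  have hdB : Differentiable ℂ B := fun z => (myDiff β B hB z).differentiableAt
  have hγcont : Continuous γ := by
    rw [hγdef]
    exact continuous_const.add (Complex.continuous_ofReal.mul continuous_const)
  have hcontf : ContinuousOn f (Set.Icc 0 1) :=
    ((hdA.continuous.comp hγcont).prodMk (hdB.continuous.comp hγcont)).continuousOn
  have hsolveA : ∀ w u1 u2 dv : ℂ, w ≠ 0 →
      w * dv = (ψ : ℂ) * u2 - (((P 0 1 : ℝ) : ℂ) * w * u1 + ((P 1 1 : ℝ) : ℂ) * w * u2) →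
      (ψ : ℂ) * u2 * w⁻¹ - (((P 0 1 : ℝ) : ℂ) * u1 + ((P 1 1 : ℝ) : ℂ) * u2) = dv := by
    intro w u1 u2 dv hw h
    apply mul_left_cancel₀ hw
    field_simp
    linear_combination -h
  have hsolveB : ∀ w u1 u2 dv : ℂ, w ≠ 0 →
      w * dv + 2 * (p : ℂ) * u2 = ((P 0 0 : ℝ) : ℂ) * w * u1 + ((P 1 0 : ℝ) : ℂ) * w * u2 →
      (((P 0 0 : ℝ) : ℂ) * u1 + ((P 1 0 : ℝ) : ℂ) * u2) - 2 * (p : ℂ) * u2 * w⁻¹ = dv := by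
    intro w u1 u2 dv hw h
    apply mul_left_cancel₀ hw
    field_simp
    linear_combination -h
  have hf' : ∀ t ∈ Set.Ico (0 : ℝ) 1, HasDerivWithinAt f (v t (f t)) (Set.Ici t) t := by
    intro t ht
    have hAd := (myDiff α A hA (γ t)).scomp t (hγd t)
    have hBd := (myDiff β B hB (γ t)).scomp t (hγd t)
    have hpair : HasDerivAt f (d • deriv A (γ t), d • deriv B (γ t)) t := hAd.prodMk hBd
    have hmax : max t 0 = t := max_eq_left ht.1
    have hne := hγne t ht.1
    have hv1 : (v t (f t)).1 = d • deriv A (γ t) := by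
      have h := eqA p hp P ψ α β hrec A B hA hB (γ t)
      simp only [hvdef, hfdef, hcdef, hmax, smul_eq_mul]
      rw [hsolveA (γ t) (A (γ t)) (B (γ t)) (deriv A (γ t)) hne h]
    have hv2 : (v t (f t)).2 = d • deriv B (γ t) := by
      have h := eqB p hp P ψ α β hrec A B hA hB (γ t)
      simp only [hvdef, hfdef, hcdef, hmax, smul_eq_mul]
      rw [hsolveB (γ t) (A (γ t)) (B (γ t)) (deriv B (γ t)) hne h]
    have hveq : v t (f t) = (d • deriv A (γ t), d • deriv B (γ t)) := by
      exact Prod.ext hv1 hv2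
    rw [hveq]
    exact hpair.hasDerivWithinAt
  set g : ℝ → ℂ × ℂ := fun _ => ((0 : ℂ), (0 : ℂ)) with hgdef
  have hg' : ∀ t ∈ Set.Ico (0 : ℝ) 1, HasDerivWithinAt g (v t (g t)) (Set.Ici t) t := by
    intro t ht
    have : v t (g t) = 0 := by simp [hvdef, hgdef]
    rw [this]
    exact (hasDerivAt_const t _).hasDerivWithinAt
  have h00 : f 0 = g 0 := by
    simp only [hfdef, hgdef, hγ0]
    exact Prod.ext hAz hBz
  have heq : Set.EqOn f g (Set.Icc 0 1) := by
    apply ODE_solution_unique_of_mem_Icc_right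
      (v := v) (s := fun _ => Set.univ) (K := Kr.toNNReal)
      (fun t _ => (hlip t).lipschitzOnWith (s := Set.univ))
      hcontf hf' (fun t _ => Set.mem_univ _)
      (continuousOn_const) hg' (fun t _ => Set.mem_univ _) h00
  -- identity theorem
  have hAanal := myAnalytic α A hA
  have hfreq : ∃ᶠ z in nhdsWithin z₀ {z₀}ᶜ, A z = 0 := by
    have htend : Tendsto (fun n : ℕ => γ (1 / ((n : ℝ) + 1))) atTop (nhdsWithin z₀ {z₀}ᶜ) := by
      rw [tendsto_nhdsWithin_iff]
      constructor
      · have h1 : Tendsto (fun n : ℕ => 1 / ((n : ℝ) + 1)) atTop (nhds 0) :=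
          tendsto_one_div_add_atTop_nhds_zero_nat
        have h2 := (hγcont.tendsto 0).comp h1
        rwa [hγ0] at h2
      · apply Filter.Eventually.of_forall
        intro n
        simp only [Set.mem_compl_iff, Set.mem_singleton_iff]
        intro h
        rw [hγdef] at h
        simp only [add_eq_left, mul_eq_zero] at h
        rcases h with h | h
        · have : (1 : ℝ) / ((n : ℝ) + 1) = 0 := by exact_mod_cast h
          have hpos : (0 : ℝ) < 1 / ((n : ℝ) + 1) := by positivity
          linarith
        · exact hdne h
    apply htend.frequently
    apply Filter.Frequently.of_forall
    intro n
    have hmem : (1 : ℝ) / ((n : ℝ) + 1) ∈ Set.Icc (0 : ℝ) 1 := by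
      constructor
      · positivity
      · rw [div_le_one (by positivity)]
        have : (0 : ℝ) ≤ (n : ℝ) := Nat.cast_nonneg n
        linarith
    have := heq hmem
    exact congrArg Prod.fst this
  have hzero := hAanal.eqOn_zero_of_preconnected_of_frequently_eq_zero
    isPreconnected_univ (Set.mem_univ z₀) hfreq
  have h0 := hzero (Set.mem_univ 0)
  rw [hA0] at h0
  exact one_ne_zero h0

end
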